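/- Let Y, θ, ε > 0 and S ≥ 1 be reals, set K := Y·θ·S/ε and x := √(ln(K + 1)), and define erf(x) := (2/√π)·∫₀^x e^{−t²} dt. Then for every real M with M ≥ (S/π)·(2·ln(K + 1) + ln S + ln(2/π)), the total error E := Y·θ·(S/2)·( (1 − erf(x))/erf(x) + (2S/π)·(1/erf(x))·exp(x²)·exp(−π·M/S) ) satisfies E ≤ ε. In particular M = O(S·ln S) suffices (for fixed Y, θ, ε) to achieve error at most ε. -/

import Mathlib

/-- The error function `erf(x) = (2/√π)·∫₀^x e^{-u²} du`. -/
noncomputable def erf (x : ℝ) : ℝ := (2 / Real.sqrt Real.pi) * ∫ u in (0:ℝ)..x, Real.exp (-u ^ 2)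

open MeasureTheory in
private lemma shift_Ioi (x : ℝ) (f : ℝ → ℝ) :
    ∫ t in Set.Ioi x, f t = ∫ s in Set.Ioi (0:ℝ), f (s + x) := by
  have h1 : MeasurePreserving (· + x) (volume : Measure ℝ) volume :=
    measurePreserving_add_right volume x
  have h2 : MeasurableEmbedding (· + x : ℝ → ℝ) :=
    (MeasurableEquiv.addRight x).measurableEmbedding
  have hpre : (· + x : ℝ → ℝ) ⁻¹' Set.Ioi x = Set.Ioi 0 := by ext s; simp
  rw [← hpre, ← h2.setIntegral_map, h1.map_eq]

open MeasureTheory in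
private lemma one_sub_exp_le_erf {x : ℝ} (hx : 0 ≤ x) :
    1 - Real.exp (-x ^ 2) ≤ erf x := by
  have hg : Integrable (fun t : ℝ => Real.exp (-t ^ 2)) := by
    simpa using integrable_exp_neg_mul_sq (one_pos (α := ℝ))
  have hIoi0 : ∫ t in Set.Ioi (0:ℝ), Real.exp (-t ^ 2) = Real.sqrt Real.pi / 2 := by
    simpa using integral_gaussian_Ioi 1
  -- tail bound
  have htail : ∫ t in Set.Ioi x, Real.exp (-t ^ 2)
      ≤ Real.exp (-x ^ 2) * (Real.sqrt Real.pi / 2) := by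
    rw [shift_Ioi]
    have hcomp : Integrable (fun s : ℝ => Real.exp (-(s + x) ^ 2)) := hg.comp_add_right x
    have hmono : ∫ s in Set.Ioi (0:ℝ), Real.exp (-(s + x) ^ 2)
        ≤ ∫ s in Set.Ioi (0:ℝ), Real.exp (-x ^ 2) * Real.exp (-s ^ 2) := by
      refine setIntegral_mono_on hcomp.integrableOn
        ((hg.const_mul _).integrableOn) measurableSet_Ioi (fun s hs => ?_)
      rw [← Real.exp_add]
      apply Real.exp_le_exp.2
      have hs0 : (0:ℝ) ≤ s := le_of_lt hs
      nlinarith [mul_nonneg hs0 hx]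
    calc ∫ s in Set.Ioi (0:ℝ), Real.exp (-(s + x) ^ 2)
        ≤ ∫ s in Set.Ioi (0:ℝ), Real.exp (-x ^ 2) * Real.exp (-s ^ 2) := hmono
      _ = Real.exp (-x ^ 2) * (Real.sqrt Real.pi / 2) := by
          rw [integral_const_mul, hIoi0]
  -- split
  have hsplit : (∫ t in Set.Ioc (0:ℝ) x, Real.exp (-t ^ 2))
      + ∫ t in Set.Ioi x, Real.exp (-t ^ 2) = Real.sqrt Real.pi / 2 := by
    rw [← hIoi0, ← Set.Ioc_union_Ioi_eq_Ioi hx]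
    exact (setIntegral_union (Set.Ioc_disjoint_Ioi le_rfl) measurableSet_Ioi
      hg.integrableOn hg.integrableOn).symm
  have hIoc : (Real.sqrt Real.pi / 2) * (1 - Real.exp (-x ^ 2))
      ≤ ∫ t in Set.Ioc (0:ℝ) x, Real.exp (-t ^ 2) := by nlinarith [htail, hsplit]
  have hπ : 0 < Real.sqrt Real.pi := Real.sqrt_pos.2 Real.pi_pos
  rw [erf, intervalIntegral.integral_of_le hx]
  rw [show (1 : ℝ) - Real.exp (-x ^ 2)
      = (2 / Real.sqrt Real.pi) * ((Real.sqrt Real.pi / 2) * (1 - Real.exp (-x ^ 2))) by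
    field_simp]
  apply mul_le_mul_of_nonneg_left hIoc (by positivity)

/-- **final lemma of the paper.** With `K = YθS/ε` and `x = √(ln(K+1))`, for every
`M ≥ (S/π)·(2·ln(K+1) + ln S + ln(2/π))` the total error
`E = Yθ(S/2)·((1 − erf x)/erf x + (2S/π)·(1/erf x)·e^{x²}·e^{-πM/S})` is at most `ε`.
In particular `M = O(S·ln S)` suffices to achieve error at most `ε`. -/
theorem total_error_small (Y θ ε S : ℝ) (hY : 0 < Y) (hθ : 0 < θ) (hε : 0 < ε)
    (hS : 1 ≤ S) (K x : ℝ) (hK : K = Y * θ * S / ε) (hx : x = Real.sqrt (Real.log (K + 1)))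
    (M : ℝ) (hM : (S / Real.pi) * (2 * Real.log (K + 1) + Real.log S + Real.log (2 / Real.pi)) ≤ M) :
    Y * θ * (S / 2) * ((1 - erf x) / erf x +
        (2 * S / Real.pi) * (1 / erf x) * Real.exp (x ^ 2) * Real.exp (-Real.pi * M / S))
      ≤ ε := by
  have hSpos : 0 < S := lt_of_lt_of_le one_pos hS
  have hKpos : 0 < K := by rw [hK]; positivity
  have hlog : 0 < Real.log (K + 1) := Real.log_pos (by linarith)
  have hx0 : 0 ≤ x := by rw [hx]; exact Real.sqrt_nonneg _
  have hx2 : x ^ 2 = Real.log (K + 1) := by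
    rw [hx, Real.sq_sqrt hlog.le]
  have hex : Real.exp (x ^ 2) = K + 1 := by
    rw [hx2, Real.exp_log (by linarith)]
  have hexneg : Real.exp (-x ^ 2) = 1 / (K + 1) := by
    rw [Real.exp_neg, hex, one_div]
  set e := erf x with he_def
  have hlb : 1 - 1 / (K + 1) ≤ e := by
    have := one_sub_exp_le_erf hx0
    rwa [hexneg] at this
  have hK1 : (0:ℝ) < K + 1 := by linarith
  have hepos : 0 < e := by
    have : 1 / (K + 1) < 1 := by
      rw [div_lt_one hK1]; linarith
    linarith
  -- bound on exp(-πM/S)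
  have hπ := Real.pi_pos
  have hMS : 2 * Real.log (K + 1) + Real.log S + Real.log (2 / Real.pi)
      ≤ Real.pi * M / S := by
    rw [div_mul_eq_mul_div, div_le_iff₀ hπ] at hM
    rw [le_div_iff₀ hSpos]
    nlinarith
  have hexpM : Real.exp (-Real.pi * M / S)
      ≤ (1 / (K + 1)) ^ 2 * (1 / S) * (Real.pi / 2) := by
    have : Real.exp (-Real.pi * M / S)
        ≤ Real.exp (-(2 * Real.log (K + 1) + Real.log S + Real.log (2 / Real.pi))) := by
      apply Real.exp_le_exp.2
      have : -Real.pi * M / S = -(Real.pi * M / S) := by ring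
      rw [this]
      linarith
    refine this.trans_eq ?_
    rw [show -(2 * Real.log (K + 1) + Real.log S + Real.log (2 / Real.pi))
        = (-Real.log (K + 1) + -Real.log (K + 1)) + -Real.log S + -Real.log (2 / Real.pi) by ring]
    rw [Real.exp_add, Real.exp_add, Real.exp_add, Real.exp_neg, Real.exp_neg, Real.exp_neg,
      Real.exp_log hK1, Real.exp_log hSpos, Real.exp_log (by positivity : (0:ℝ) < 2 / Real.pi)]
    field_simp
  -- assemble
  have hterm1 : (1 - e) / e ≤ (1 / (K + 1)) / e := by
    gcongr
    linarith
  have hterm2 : (2 * S / Real.pi) * (1 / e) * Real.exp (x ^ 2) * Real.exp (-Real.pi * M / S)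
      ≤ (1 / (K + 1)) / e := by
    rw [hex]
    calc (2 * S / Real.pi) * (1 / e) * (K + 1) * Real.exp (-Real.pi * M / S)
        ≤ (2 * S / Real.pi) * (1 / e) * (K + 1) * ((1 / (K + 1)) ^ 2 * (1 / S) * (Real.pi / 2)) :=
          mul_le_mul_of_nonneg_left hexpM (by positivity)
      _ = (1 / (K + 1)) / e := by field_simp
  have hKε : ε * K = Y * θ * S := by rw [hK]; field_simp
  have hsum : (1 - e) / e +
      (2 * S / Real.pi) * (1 / e) * Real.exp (x ^ 2) * Real.exp (-Real.pi * M / S)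
      ≤ 2 * ((1 / (K + 1)) / e) := by linarith
  calc Y * θ * (S / 2) * ((1 - e) / e +
        (2 * S / Real.pi) * (1 / e) * Real.exp (x ^ 2) * Real.exp (-Real.pi * M / S))
      ≤ Y * θ * (S / 2) * (2 * ((1 / (K + 1)) / e)) :=
        mul_le_mul_of_nonneg_left hsum (by positivity)
    _ = (Y * θ * S / (K + 1)) / e := by field_simp
    _ ≤ ε := by
        rw [div_le_iff₀ hepos]
        have h1 : ε * (1 - 1 / (K + 1)) ≤ ε * e := mul_le_mul_of_nonneg_left hlb hε.le
        have h2 : Y * θ * S / (K + 1) = ε * (1 - 1 / (K + 1)) := by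
          rw [← hKε]; field_simp; ring
        linarith
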